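/- For m ≥ 0, the inclusion φ^m(T)·Ã⁺ ⊆ Ã⁺ ∩ φ^m(T)·B̃⁺_rig is an equality: any x ∈ Ã⁺ that is divisible by φ^m(T) in B̃⁺_rig is already divisible by φ^m(T) in Ã⁺. -/
import Mathlib


/-- Corollary on divisibilities: let `Ã⁺ ⊆ B̃⁺_rig` be subrings of `B_dR⁺ = C`,
stable under the bijective Frobenius `φ`, with `θ : C →+* k`, `T ∈ Ã⁺`,
`t ∈ B̃⁺_rig`.  Assume:
(a) if `x ∈ Ã⁺` and `φ^n(x) ∈ ker θ` for all `n ≥ 0`, then `T ∣ x` in `Ã⁺`;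
(b) if `x ∈ B̃⁺_rig` and `φ^n(x) ∈ ker θ` for all `n ∈ ℤ`, then `t ∣ x` in `B̃⁺_rig`;
together with: `φ^n(T) ∣ t` in `C` for `n ≥ 0`, `φ^n(T)` is a unit in `C` for
`n < 0`, and `φ^n(T) ∈ ker θ` for `n ≥ 0`.
Then for every `m ≥ 0`, the inclusion `φ^m(T)·Ã⁺ ⊆ Ã⁺ ∩ φ^m(T)·B̃⁺_rig` is an
equality: any `x ∈ Ã⁺` divisible by `φ^m(T)` in `B̃⁺_rig` is divisible by
`φ^m(T)` in `Ã⁺`. -/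
theorem stmt10 (C : Type*) [CommRing C] (A B : Subring C) (hAB : A ≤ B)
    (φ : RingAut C)
    (hφA : ∀ x : C, x ∈ A ↔ φ x ∈ A) (hφB : ∀ x : C, x ∈ B ↔ φ x ∈ B)
    (k : Type*) [Field k] (θ : C →+* k)
    (T : C) (hTA : T ∈ A) (t : C) (htB : t ∈ B)
    (ha : ∀ x ∈ A, (∀ n : ℕ, (φ ^ n) x ∈ RingHom.ker θ) →
      ∃ y ∈ A, x = T * y)
    (hb : ∀ x ∈ B, (∀ n : ℤ, (φ ^ n) x ∈ RingHom.ker θ) →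
      ∃ y ∈ B, x = t * y)
    (hTdvd : ∀ n : ℕ, (φ ^ n) T ∣ t)
    (hTunit : ∀ n : ℤ, n < 0 → IsUnit ((φ ^ n) T))
    (hTker : ∀ n : ℕ, (φ ^ n) T ∈ RingHom.ker θ) :
    ∀ m : ℕ, ∀ x ∈ A, (∃ y ∈ B, x = (φ ^ m) T * y) →
      ∃ z ∈ A, x = (φ ^ m) T * z := by
  rintro m x hxA ⟨y, hyB, hxy⟩
  -- stability of A under powers of φ
  have hmemA : ∀ (n : ℕ) (z : C), z ∈ A → (φ ^ n) z ∈ A := by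
    intro n
    induction n with
    | zero => intro z hz; simpa using hz
    | succ k ih =>
        intro z hz
        have : (φ ^ (k + 1)) z = (φ ^ k) (φ z) := by
          rw [pow_succ]; rfl
        rw [this]
        exact ih _ ((hφA z).1 hz)
  have hAinv : ∀ z : C, z ∈ A → φ⁻¹ z ∈ A := by
    intro z hz
    refine (hφA (φ⁻¹ z)).2 ?_
    have : φ (φ⁻¹ z) = z := φ.apply_symm_apply z
    rw [this]; exact hz
  have hmemAinv : ∀ (n : ℕ) (z : C), z ∈ A → (φ⁻¹ ^ n) z ∈ A := by
    intro n
    induction n with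
    | zero => intro z hz; simpa using hz
    | succ k ih =>
        intro z hz
        have : (φ⁻¹ ^ (k + 1)) z = (φ⁻¹ ^ k) (φ⁻¹ z) := by
          rw [pow_succ]; rfl
        rw [this]
        exact ih _ (hAinv z hz)
  -- pull back by φ^{-m}
  set e : RingAut C := φ ^ m with he
  have hei : ∀ z : C, e (e⁻¹ z) = z := fun z => e.apply_symm_apply z
  have hie : ∀ z : C, e⁻¹ (e z) = z := fun z => e.symm_apply_apply z
  have hinvpow : (e⁻¹ : RingAut C) = φ⁻¹ ^ m := by rw [he, inv_pow]
  have hx'A : e⁻¹ x ∈ A := by rw [hinvpow]; exact hmemAinv m x hxA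
  have hx'eq : e⁻¹ x = T * e⁻¹ y := by
    rw [hxy, map_mul, hie]
  -- kernel condition for the pulled-back element
  have hker : ∀ n : ℕ, (φ ^ n) (e⁻¹ x) ∈ RingHom.ker θ := by
    intro n
    rw [hx'eq, map_mul, RingHom.mem_ker, map_mul,
      RingHom.mem_ker.mp (hTker n), zero_mul]
  obtain ⟨z', hz'A, hz'⟩ := ha (e⁻¹ x) hx'A hker
  refine ⟨e z', by rw [he]; exact hmemA m z' hz'A, ?_⟩
  have := congrArg e hz'
  rw [hei, map_mul] at this
  exact this
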